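/- Let X be a Hilbert space, T ∈ B(X) with a core inverse S, and δT ∈ B(X) with ‖S·δT‖ < 1. If TS·δT = δT, then B = (I + S·δT)⁻¹S is a core inverse of T̄ = T + δT and the norm bounds ‖S‖/(1 + ‖S·δT‖) ≤ ‖B‖ ≤ ‖S‖/(1 − ‖S·δT‖) hold. -/

import Mathlib

theorem stmt_10 {X : Type*} [NormedAddCommGroup X] [InnerProductSpace ℂ X]
    [CompleteSpace X] (T S δT : X →L[ℂ] X)
    (h1 : T * S * T = T)
    (h2 : S * T * S = S)
    (h3 : ContinuousLinearMap.adjoint (T * S) = T * S)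
    (h6 : S * T * T = T)
    (h7 : T * S * S = S)
    (hnorm : ‖S * δT‖ < 1)
    (hd : T * S * δT = δT) :
    (T + δT) * (Ring.inverse (1 + S * δT) * S) * (T + δT) = T + δT ∧
    (Ring.inverse (1 + S * δT) * S) * (T + δT) * (Ring.inverse (1 + S * δT) * S) =
      Ring.inverse (1 + S * δT) * S ∧
    ContinuousLinearMap.adjoint ((T + δT) * (Ring.inverse (1 + S * δT) * S)) =
      (T + δT) * (Ring.inverse (1 + S * δT) * S) ∧
    (Ring.inverse (1 + S * δT) * S) * (T + δT) * (T + δT) = T + δT ∧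
    (T + δT) * (Ring.inverse (1 + S * δT) * S) * (Ring.inverse (1 + S * δT) * S) =
      Ring.inverse (1 + S * δT) * S ∧
    ‖S‖ / (1 + ‖S * δT‖) ≤ ‖Ring.inverse (1 + S * δT) * S‖ ∧
    ‖Ring.inverse (1 + S * δT) * S‖ ≤ ‖S‖ / (1 - ‖S * δT‖) := by
  have hx : ‖-(S * δT)‖ < 1 := by rwa [norm_neg]
  have heq : (1 : X →L[ℂ] X) + S * δT = 1 - -(S * δT) := by rw [sub_neg_eq_add]
  have hu : IsUnit ((1 : X →L[ℂ] X) + S * δT) := by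
    rw [heq]; exact isUnit_one_sub_of_norm_lt_one hx
  set u : X →L[ℂ] X := 1 + S * δT with hu_def
  set v : X →L[ℂ] X := Ring.inverse u with hv_def
  have hvu : v * u = 1 := Ring.inverse_mul_cancel u hu
  have huv : u * v = 1 := Ring.mul_inverse_cancel u hu
  have hTu : T * u = T + δT := by
    have h' : T * (S * δT) = δT := by rw [← mul_assoc, hd]
    rw [hu_def, mul_add, mul_one, h']
  have hTSB : (T + δT) * (v * S) = T * S := by
    rw [← hTu, mul_assoc, ← mul_assoc u v S, huv, one_mul]
  have hSTd : S * T * δT = δT := by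
    calc S * T * δT = S * T * (T * S * δT) := by rw [hd]
    _ = S * T * T * (S * δT) := by noncomm_ring
    _ = T * S * δT := by rw [h6]; noncomm_ring
    _ = δT := hd
  refine ⟨?_, ?_, ?_, ?_, ?_, ?_, ?_⟩
  · rw [hTSB, mul_add, h1, hd]
  · calc v * S * (T + δT) * (v * S) = v * (S * ((T + δT) * (v * S))) := by noncomm_ring
    _ = v * (S * T * S) := by rw [hTSB]; noncomm_ring
    _ = v * S := by rw [h2]
  · rw [hTSB]; exact h3
  · have key4 : S * (T + δT) * (T + δT) = u * (T + δT) := by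
      calc S * (T + δT) * (T + δT)
          = S * T * T + S * T * δT + S * δT * (T + δT) := by noncomm_ring
      _ = T + δT + S * δT * (T + δT) := by rw [h6, hSTd]
      _ = u * (T + δT) := by rw [hu_def]; noncomm_ring
    calc v * S * (T + δT) * (T + δT) = v * (S * (T + δT) * (T + δT)) := by noncomm_ring
    _ = v * (u * (T + δT)) := by rw [key4]
    _ = T + δT := by rw [← mul_assoc, hvu, one_mul]
  · have h5key : (1 - T * S) * u = 1 - T * S := by
      calc (1 - T * S) * u = 1 + S * δT - T * S - T * S * S * δT := by
            rw [hu_def]; noncomm_ring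
      _ = 1 - T * S := by rw [h7]; noncomm_ring
    have h5v : (1 - T * S) * v = 1 - T * S := by
      calc (1 - T * S) * v = (1 - T * S) * u * v := by rw [h5key]
      _ = (1 - T * S) * (u * v) := by rw [mul_assoc]
      _ = 1 - T * S := by rw [huv, mul_one]
    have h5b : v * S - T * S * (v * S) = 0 := by
      calc v * S - T * S * (v * S) = (1 - T * S) * v * S := by noncomm_ring
      _ = (1 - T * S) * S := by rw [h5v]
      _ = S - T * S * S := by noncomm_ring
      _ = 0 := by rw [h7, sub_self]
    rw [hTSB]
    exact (sub_eq_zero.mp h5b).symm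
  · have hS_eq : S = u * (v * S) := by rw [← mul_assoc, huv, one_mul]
    have hunorm : ‖u‖ ≤ 1 + ‖S * δT‖ := by
      calc ‖u‖ ≤ ‖(1 : X →L[ℂ] X)‖ + ‖S * δT‖ := norm_add_le _ _
      _ ≤ 1 + ‖S * δT‖ := by
          have : ‖(1 : X →L[ℂ] X)‖ ≤ 1 := by
            exact ContinuousLinearMap.norm_id_le (E := X) (𝕜 := ℂ)
          linarith
    have hpos : (0 : ℝ) < 1 + ‖S * δT‖ := by positivity
    rw [div_le_iff₀ hpos]
    calc ‖S‖ = ‖u * (v * S)‖ := by rw [← hS_eq]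
    _ ≤ ‖u‖ * ‖v * S‖ := norm_mul_le _ _
    _ ≤ (1 + ‖S * δT‖) * ‖v * S‖ := by
        exact mul_le_mul_of_nonneg_right hunorm (norm_nonneg _)
    _ = ‖v * S‖ * (1 + ‖S * δT‖) := by ring
  · have hvnorm : ‖v‖ ≤ (1 - ‖S * δT‖)⁻¹ := by
      have hinv_eq : v = ∑' n : ℕ, (-(S * δT)) ^ n := by
        rw [hv_def, heq, ← geom_series_eq_inverse _ hx]
      have hb := tsum_geometric_le_of_norm_lt_one (-(S * δT)) hx
      rw [norm_neg] at hb
      have h1n : ‖(1 : X →L[ℂ] X)‖ ≤ 1 := by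
        exact ContinuousLinearMap.norm_id_le (E := X) (𝕜 := ℂ)
      rw [hinv_eq]; linarith
    have hpos : (0 : ℝ) < 1 - ‖S * δT‖ := by linarith
    rw [le_div_iff₀ hpos]
    calc ‖v * S‖ * (1 - ‖S * δT‖) ≤ ‖v‖ * ‖S‖ * (1 - ‖S * δT‖) :=
          mul_le_mul_of_nonneg_right (norm_mul_le _ _) (le_of_lt hpos)
    _ ≤ (1 - ‖S * δT‖)⁻¹ * ‖S‖ * (1 - ‖S * δT‖) := by
        have := mul_le_mul_of_nonneg_right hvnorm (norm_nonneg S)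
        nlinarith [norm_nonneg S]
    _ = ‖S‖ := by field_simp
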